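/- Let $a > 0$ and $r \in \mathbb{R}$, $n \geq 1$. If $\{s_k\}_{k \geq 0}$ is a real sequence with $s_k = a r^k$ for all $0 \leq k \leq 2n$ and every Hankel matrix $[s_{i+j}]_{i,j=0}^m$ is positive semidefinite, then $s_k = a r^k$ for all $k \geq 0$. -/
import Mathlib

/-- Hankel matrix of a sequence. -/
def hankelMatrix (s : ℕ → ℝ) (n : ℕ) : Matrix (Fin (n + 1)) (Fin (n + 1)) ℝ :=
  Matrix.of fun i j => s ((i : ℕ) + (j : ℕ))

open Matrix in
theorem stmt_10 (a r : ℝ) (ha : 0 < a) (n : ℕ) (hn : 1 ≤ n) (s : ℕ → ℝ)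
    (hinit : ∀ k ≤ 2 * n, s k = a * r ^ k)
    (hs : ∀ m, (hankelMatrix s m).PosSemidef) :
    ∀ k, s k = a * r ^ k := by
  intro k
  induction k using Nat.strong_induction_on with
  | _ k IH =>
  by_cases hk : k ≤ 2 * n
  · exact hinit k hk
  push_neg at hk
  set M := k - n with hM
  have h1 : n - 1 < M + 1 := by omega
  have h2 : n < M + 1 := by omega
  have h3 : k - n < M + 1 := by omega
  set i1 : Fin (M+1) := ⟨n-1, h1⟩ with hi1
  set i2 : Fin (M+1) := ⟨n, h2⟩ with hi2
  set p : Fin (M+1) := ⟨k-n, h3⟩ with hp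
  set H := hankelMatrix s M with hH
  set v : Fin (M+1) → ℝ := r • (Pi.single i1 1 : Fin (M+1) → ℝ) - (Pi.single i2 1 : Fin (M+1) → ℝ) with hv
  have hIH : ∀ j < k, s j = a * r ^ j := fun j hj => IH j hj
  have hw : H *ᵥ v = fun i => r * H i i1 - H i i2 := by
    rw [hv, Matrix.mulVec_sub, Matrix.mulVec_smul, Matrix.mulVec_single, Matrix.mulVec_single]
    funext i
    simp [mul_one]
  have hHval : ∀ i j : Fin (M+1), H i j = s ((i:ℕ) + (j:ℕ)) := fun i j => rfl
  have hq : star v ⬝ᵥ H *ᵥ v = 0 := by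
    rw [star_trivial, hw, hv, sub_dotProduct, smul_dotProduct,
      single_dotProduct, single_dotProduct]
    simp only [smul_eq_mul, one_mul]
    have e11 : H i1 i1 = s ((n-1) + (n-1)) := rfl
    have e12 : H i2 i1 = s (n + (n-1)) := rfl
    have e21 : H i1 i2 = s ((n-1) + n) := rfl
    have e22 : H i2 i2 = s (n + n) := rfl
    have v1 : s ((n-1) + (n-1)) = a * r ^ ((n-1)+(n-1)) := hinit _ (by omega)
    have v2 : s (n + (n-1)) = a * r ^ (n + (n-1)) := hinit _ (by omega)
    have v3 : s ((n-1) + n) = a * r ^ ((n-1)+n) := hinit _ (by omega)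
    have v4 : s (n + n) = a * r ^ (n + n) := hinit _ (by omega)
    rw [e11, e12, e21, e22, v1, v2, v3, v4]
    have e1 : (n-1)+(n-1) + 2 = n + n := by omega
    have e2 : n + (n-1) + 1 = n + n := by omega
    have e3 : (n-1) + n + 1 = n + n := by omega
    have : r * r ^ ((n-1)+(n-1)) * r = r ^ (n+n) := by
      rw [← e1]; ring
    nlinarith [pow_succ r (n + (n-1)), pow_succ r ((n-1)+n), this,
      (by rw [← e2]; rw [pow_succ] : r ^ (n+(n-1)) * r = r ^ (n+n)),
      (by rw [← e3]; rw [pow_succ] : r ^ ((n-1)+n) * r = r ^ (n+n))]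
  have hz : H *ᵥ v = 0 := ((hs M).dotProduct_mulVec_zero_iff v).mp hq
  have hzp := congrFun hz p
  rw [hw] at hzp
  have ep1 : ((p:ℕ) + (i1:ℕ)) = k - 1 := by simp [hp, hi1]; omega
  have ep2 : ((p:ℕ) + (i2:ℕ)) = k := by simp [hp, hi2]; omega
  have : r * s (k-1) - s k = 0 := by
    have e1 : H p i1 = s ((p:ℕ)+(i1:ℕ)) := rfl
    have e2 : H p i2 = s ((p:ℕ)+(i2:ℕ)) := rfl
    have hzp' : r * H p i1 - H p i2 = 0 := by simpa using hzp
    rw [e1, e2, ep1, ep2] at hzp'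
    exact hzp'
  have hk1 : s (k-1) = a * r ^ (k-1) := hIH _ (by omega)
  have hpow : r * r ^ (k-1) = r ^ k := by
    rw [← pow_succ']
    congr 1
    omega
  rw [hk1] at this
  nlinarith [this, hpow]
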